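/- Under a 2² completely randomized design with arm sizes N₁,…,N₄, the estimator τ̂_F is unbiased for τ_F with sampling variance Var_CR(τ̂_F) = 4⁻¹(N-1)·g_F^T (C ∘ S²) g_F, where C = [N(N-1)]⁻¹(diag{N/N₁,…,N/N₄} - J₄) and S² is the 4×4 finite-population covariance matrix of the potential outcomes. -/

import Mathlib

open Finset

namespace CRDhelp
variable {N : ℕ} {arm : Fin 4 → ℕ} {A : Finset (Fin N → Fin 4)}

def wInd (T : Fin N → Fin 4) (i : Fin N) (k : Fin 4) : ℝ := if T i = k then 1 else 0

theorem comp_mem (hA : ∀ T : Fin N → Fin 4, T ∈ A ↔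
      ∀ j, (univ.filter (fun i => T i = j)).card = arm j)
    (σ : Equiv.Perm (Fin N)) {T} (hT : T ∈ A) : T ∘ σ ∈ A := by
  rw [hA] at hT ⊢
  intro j
  rw [← hT j]
  apply Finset.card_bij' (fun i _ => σ i) (fun i _ => σ.symm i) <;> simp

theorem sum_comp (hA : ∀ T : Fin N → Fin 4, T ∈ A ↔
      ∀ j, (univ.filter (fun i => T i = j)).card = arm j)
    (σ : Equiv.Perm (Fin N)) (f : (Fin N → Fin 4) → ℝ) :
    ∑ T ∈ A, f (T ∘ σ) = ∑ T ∈ A, f T := by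
  apply Finset.sum_nbij' (fun T => T ∘ σ) (fun T => T ∘ σ.symm)
  · intro T hT; exact comp_mem hA σ hT
  · intro T hT; exact comp_mem hA σ.symm hT
  · intro T hT; funext x; simp
  · intro T hT; funext x; simp
  · intro T hT; rfl

theorem sum_wInd (hA : ∀ T : Fin N → Fin 4, T ∈ A ↔
      ∀ j, (univ.filter (fun i => T i = j)).card = arm j)
    {T} (hT : T ∈ A) (k : Fin 4) : ∑ i, wInd T i k = arm k := by
  rw [hA] at hT
  rw [← hT k]
  simp [wInd, Finset.sum_boole]

theorem mu1 (hA : ∀ T : Fin N → Fin 4, T ∈ A ↔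
      ∀ j, (univ.filter (fun i => T i = j)).card = arm j)
    (i : Fin N) (k : Fin 4) :
    (N : ℝ) * ∑ T ∈ A, wInd T i k = A.card * arm k := by
  have hconst : ∀ i' : Fin N, ∑ T ∈ A, wInd T i' k = ∑ T ∈ A, wInd T i k := by
    intro i'
    have h := sum_comp hA (Equiv.swap i i') (fun T => wInd T i k)
    simp only [wInd, Function.comp_apply, Equiv.swap_apply_left] at h
    simpa [wInd] using h
  calc (N : ℝ) * ∑ T ∈ A, wInd T i k = ∑ i' : Fin N, ∑ T ∈ A, wInd T i' k := by
        rw [Finset.sum_congr rfl (fun i' _ => hconst i')]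
        simp [mul_comm]
    _ = ∑ T ∈ A, ∑ i' : Fin N, wInd T i' k := Finset.sum_comm
    _ = ∑ T ∈ A, (arm k : ℝ) := Finset.sum_congr rfl (fun T hT => sum_wInd hA hT k)
    _ = A.card * arm k := by simp [mul_comm]

theorem pair_perm {i j i' j' : Fin N} (hij : i ≠ j) (hij' : i' ≠ j') :
    ∃ σ : Equiv.Perm (Fin N), σ i = i' ∧ σ j = j' := by
  classical
  set σ1 := Equiv.swap i i' with hσ1
  set j1 := σ1 j with hj1
  have hji : j1 ≠ i' := by
    rw [hj1]
    intro h
    have : σ1 j = σ1 i := by rw [h, hσ1, Equiv.swap_apply_left]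
    exact hij (σ1.injective this).symm
  refine ⟨σ1.trans (Equiv.swap j1 j'), ?_, ?_⟩
  · simp only [Equiv.trans_apply]
    rw [show σ1 i = i' by rw [hσ1]; exact Equiv.swap_apply_left i i']
    exact Equiv.swap_apply_of_ne_of_ne hji.symm hij'
  · simp only [Equiv.trans_apply, ← hj1, Equiv.swap_apply_left]

theorem wInd_diag (T : Fin N → Fin 4) (i : Fin N) (k l : Fin 4) :
    wInd T i k * wInd T i l = if k = l then wInd T i k else 0 := by
  unfold wInd
  rcases eq_or_ne (T i) k with h | h <;> rcases eq_or_ne k l with h2 | h2 <;>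
    simp_all [h, h2]

theorem mu1' (hA : ∀ T : Fin N → Fin 4, T ∈ A ↔
      ∀ j, (univ.filter (fun i => T i = j)).card = arm j) (k : Fin 4) :
    ∑ i : Fin N, ∑ T ∈ A, wInd T i k = (A.card : ℝ) * arm k := by
  rw [Finset.sum_comm]
  rw [Finset.sum_congr rfl (fun T hT => sum_wInd hA hT k)]
  simp [mul_comm]

theorem mu2 (hN : 2 ≤ N)
    (hA : ∀ T : Fin N → Fin 4, T ∈ A ↔
      ∀ j, (univ.filter (fun i => T i = j)).card = arm j)
    {i j : Fin N} (hij : i ≠ j) (k l : Fin 4) :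
    (N : ℝ) * ((N : ℝ) - 1) * ∑ T ∈ A, wInd T i k * wInd T j l
      = A.card * ((arm k : ℝ) * arm l - if k = l then (arm k : ℝ) else 0) := by
  set S := ∑ T ∈ A, wInd T i k * wInd T j l with hS
  have hconst : ∀ i' j' : Fin N, i' ≠ j' →
      ∑ T ∈ A, wInd T i' k * wInd T j' l = S := by
    intro i' j' hij'
    obtain ⟨σ, hσi, hσj⟩ := pair_perm hij hij'
    have h := sum_comp hA σ (fun T => wInd T i k * wInd T j l)
    simp only [wInd, Function.comp_apply, hσi, hσj] at h
    rw [hS]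
    simp only [wInd] at h ⊢
    rw [← h]
  have htot : ∑ i' : Fin N, ∑ j' : Fin N, ∑ T ∈ A, wInd T i' k * wInd T j' l
      = (A.card : ℝ) * (arm k * arm l) := by
    have h1 : ∀ i' : Fin N, ∑ j' : Fin N, ∑ T ∈ A, wInd T i' k * wInd T j' l
        = ∑ T ∈ A, ∑ j' : Fin N, wInd T i' k * wInd T j' l :=
      fun i' => Finset.sum_comm
    rw [Finset.sum_congr rfl (fun i' _ => h1 i'), Finset.sum_comm]
    have h2 : ∀ T ∈ A, ∑ i' : Fin N, ∑ j' : Fin N, wInd T i' k * wInd T j' l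
        = (arm k : ℝ) * arm l := by
      intro T hT
      rw [← Finset.sum_mul_sum]
      rw [sum_wInd hA hT k, sum_wInd hA hT l]
    rw [Finset.sum_congr rfl h2]
    simp [mul_comm, mul_assoc]
  have hdiag : ∑ i' : Fin N, ∑ T ∈ A, wInd T i' k * wInd T i' l
      = if k = l then (A.card : ℝ) * arm k else 0 := by
    have h1 : ∀ i' : Fin N, ∑ T ∈ A, wInd T i' k * wInd T i' l
        = if k = l then ∑ T ∈ A, wInd T i' k else 0 := by
      intro i'
      rw [Finset.sum_congr rfl (fun T _ => wInd_diag T i' k l)]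
      split_ifs <;> simp
    rw [Finset.sum_congr rfl (fun i' _ => h1 i')]
    split_ifs with h
    · exact mu1' hA k
    · simp
  have herase : ∀ i' : Fin N, ∑ j' ∈ univ.erase i', ∑ T ∈ A, wInd T i' k * wInd T j' l
      = ((N : ℝ) - 1) * S := by
    intro i'
    rw [Finset.sum_congr rfl
      (fun j' hj' => hconst i' j' (Ne.symm (Finset.ne_of_mem_erase hj')))]
    rw [Finset.sum_const, Finset.card_erase_of_mem (mem_univ i')]
    rw [Finset.card_univ, Fintype.card_fin]
    rw [nsmul_eq_mul, Nat.cast_sub (by omega)]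
    norm_num
  have hsplit : ∀ i' : Fin N, ∑ j' : Fin N, ∑ T ∈ A, wInd T i' k * wInd T j' l
      = (∑ T ∈ A, wInd T i' k * wInd T i' l) + ((N : ℝ) - 1) * S := by
    intro i'
    rw [← Finset.add_sum_erase univ _ (mem_univ i'), herase i']
  have hcomb : (A.card : ℝ) * (arm k * arm l)
      = (if k = l then (A.card : ℝ) * arm k else 0) + (N : ℝ) * (((N : ℝ) - 1) * S) := by
    rw [← htot, Finset.sum_congr rfl (fun i' _ => hsplit i'), Finset.sum_add_distrib, hdiag]
    simp [Finset.sum_const, mul_comm]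
  split_ifs at hcomb ⊢ with h
  · rw [h] at hcomb ⊢; nlinarith [hcomb]
  · nlinarith [hcomb]


theorem reorder5 {α : Type*} (A : Finset α) (F : α → Fin 4 → Fin 4 → Fin N → Fin N → ℝ) :
    ∑ T ∈ A, ∑ k, ∑ l, ∑ i, ∑ j, F T k l i j
      = ∑ k, ∑ l, ∑ i, ∑ j, ∑ T ∈ A, F T k l i j := by
  rw [Finset.sum_comm]
  exact Finset.sum_congr rfl fun k _ => by
    rw [Finset.sum_comm]
    exact Finset.sum_congr rfl fun l _ => by
      rw [Finset.sum_comm]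
      exact Finset.sum_congr rfl fun i _ => Finset.sum_comm

theorem reorder3 {α : Type*} (A : Finset α) (F : α → Fin 4 → Fin 4 → ℝ) :
    ∑ T ∈ A, ∑ k, ∑ l, F T k l = ∑ k, ∑ l, ∑ T ∈ A, F T k l := by
  rw [Finset.sum_comm]
  exact Finset.sum_congr rfl fun k _ => Finset.sum_comm

theorem reorderT {α : Type*} {n : ℕ} (A : Finset α) (F : α → Fin n → Fin n → ℝ) :
    ∑ T ∈ A, ∑ i, ∑ j, F T i j = ∑ i, ∑ j, ∑ T ∈ A, F T i j := by
  rw [Finset.sum_comm]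
  exact Finset.sum_congr rfl fun i _ => Finset.sum_comm

theorem auxdiag (a c n G q : ℝ) (ha : a ≠ 0) (hc : c ≠ 0) (hn : n ≠ 0) (hn1 : n - 1 ≠ 0) :
    c⁻¹ * (2⁻¹ * G * a⁻¹ * (2⁻¹ * G * a⁻¹) *
        ((c * a / n - c * (a * a - a) / (n * (n - 1))) * q))
      = 4⁻¹ * (n - 1) * (G * G * ((n * (n - 1))⁻¹ * (n / a - 1) * ((n - 1)⁻¹ * q))) := by
  field_simp
  ring

theorem auxoff (a b c n G H q : ℝ) (ha : a ≠ 0) (hb : b ≠ 0) (hc : c ≠ 0) (hn : n ≠ 0)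
    (hn1 : n - 1 ≠ 0) :
    c⁻¹ * (2⁻¹ * G * a⁻¹ * (2⁻¹ * H * b⁻¹) *
        ((0 - c * (a * b - 0) / (n * (n - 1))) * q))
      = 4⁻¹ * (n - 1) * (G * H * ((n * (n - 1))⁻¹ * (0 - 1) * ((n - 1)⁻¹ * q))) := by
  field_simp
  ring

end CRDhelp

def gA : Fin 4 → ℝ := ![-1, -1, 1, 1]
def gB : Fin 4 → ℝ := ![-1, 1, -1, 1]
def gAB : Fin 4 → ℝ := ![1, -1, -1, 1]

theorem crd_estimator_unbiased_and_variance
    (N : ℕ) (hN : 2 ≤ N) (arm : Fin 4 → ℕ) (harm : ∀ k, 0 < arm k)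
    (hsum : ∑ k, arm k = N) (Y : Fin N → Fin 4 → ℝ)
    (g : Fin 4 → ℝ) (hg : g ∈ ({gA, gB, gAB} : Set (Fin 4 → ℝ)))
    (A : Finset (Fin N → Fin 4))
    (hA : A = Finset.univ.filter
      (fun T => ∀ j, (Finset.univ.filter (fun i => T i = j)).card = arm j))
    (hAne : A.Nonempty) :
    ((A.card : ℝ)⁻¹ * ∑ T ∈ A,
        (2⁻¹ * ∑ k, g k * ((arm k : ℝ)⁻¹ *
          ∑ i ∈ Finset.univ.filter (fun i => T i = k), Y i k))
      = 2⁻¹ * ∑ k, g k * ((N : ℝ)⁻¹ * ∑ i, Y i k)) ∧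
    ((A.card : ℝ)⁻¹ * ∑ T ∈ A,
        ((2⁻¹ * ∑ k, g k * ((arm k : ℝ)⁻¹ *
            ∑ i ∈ Finset.univ.filter (fun i => T i = k), Y i k))
          - 2⁻¹ * ∑ k, g k * ((N : ℝ)⁻¹ * ∑ i, Y i k)) ^ 2
      = 4⁻¹ * ((N : ℝ) - 1) * ∑ k, ∑ l, g k * g l *
          ((((N : ℝ) * ((N : ℝ) - 1))⁻¹
              * ((if k = l then (N : ℝ) / (arm k : ℝ) else 0) - 1))
            * (((N : ℝ) - 1)⁻¹ * ∑ i,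
                (Y i k - (N : ℝ)⁻¹ * ∑ i', Y i' k)
                  * (Y i l - (N : ℝ)⁻¹ * ∑ i', Y i' l)))) := by
  classical
  have hA' : ∀ T : Fin N → Fin 4, T ∈ A ↔
      ∀ j, (univ.filter (fun i => T i = j)).card = arm j := by
    intro T; rw [hA]; simp
  have hNR : (N : ℝ) ≠ 0 := by
    have : N ≠ 0 := by omega
    exact_mod_cast this
  have hN2 : (2 : ℝ) ≤ (N : ℝ) := by exact_mod_cast hN
  have hN1 : (N : ℝ) - 1 ≠ 0 := by linarith
  have haR : ∀ k, (arm k : ℝ) ≠ 0 := fun k => by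
    have := (harm k).ne'
    exact_mod_cast this
  have hcard : (A.card : ℝ) ≠ 0 := by
    have := (Finset.card_pos.mpr hAne).ne'
    exact_mod_cast this
  -- normalized expectations
  have key1 : ∀ (i : Fin N) (k : Fin 4),
      ∑ T ∈ A, CRDhelp.wInd T i k = (A.card : ℝ) * arm k / N := by
    intro i k
    have h := CRDhelp.mu1 hA' i k
    rw [eq_div_iff hNR]
    linarith
  have key2 : ∀ (i j : Fin N) (k l : Fin 4), i ≠ j →
      ∑ T ∈ A, CRDhelp.wInd T i k * CRDhelp.wInd T j l
        = (A.card : ℝ) * ((arm k : ℝ) * arm l - if k = l then (arm k : ℝ) else 0)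
            / ((N : ℝ) * ((N : ℝ) - 1)) := by
    intro i j k l hij
    have h := CRDhelp.mu2 hN hA' hij k l
    rw [eq_div_iff (mul_ne_zero hNR hN1)]
    linarith
  have keyd : ∀ (i : Fin N) (k l : Fin 4),
      ∑ T ∈ A, CRDhelp.wInd T i k * CRDhelp.wInd T i l
        = if k = l then (A.card : ℝ) * arm k / N else 0 := by
    intro i k l
    rw [Finset.sum_congr rfl (fun T _ => CRDhelp.wInd_diag T i k l)]
    split_ifs with h
    · exact key1 i k
    · simp
  -- rewrite filtered sums as indicator sums
  have hwY : ∀ (T : Fin N → Fin 4) (k : Fin 4) (f : Fin N → ℝ),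
      ∑ i ∈ univ.filter (fun i => T i = k), f i = ∑ i, CRDhelp.wInd T i k * f i := by
    intro T k f
    rw [Finset.sum_filter]
    exact Finset.sum_congr rfl fun i _ => by
      unfold CRDhelp.wInd; split_ifs <;> simp
  have hest : ∀ T ∈ A,
      (2⁻¹ * ∑ k, g k * ((arm k : ℝ)⁻¹ *
          ∑ i ∈ univ.filter (fun i => T i = k), Y i k))
        = ∑ k, (2⁻¹ * g k * (arm k : ℝ)⁻¹) * ∑ i, CRDhelp.wInd T i k * Y i k := by
    intro T _
    rw [Finset.mul_sum]
    exact Finset.sum_congr rfl fun k _ => by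
      rw [hwY T k (fun i => Y i k)]; ring
  constructor
  · -- Part 1: unbiasedness
    rw [Finset.sum_congr rfl hest, Finset.sum_comm, Finset.mul_sum]
    rw [show (2⁻¹ : ℝ) * ∑ k, g k * ((N : ℝ)⁻¹ * ∑ i, Y i k)
        = ∑ k, 2⁻¹ * (g k * ((N : ℝ)⁻¹ * ∑ i, Y i k)) from Finset.mul_sum _ _ _]
    refine Finset.sum_congr rfl fun k _ => ?_
    rw [← Finset.mul_sum, Finset.sum_comm]
    rw [Finset.sum_congr rfl (fun i (_ : i ∈ (univ : Finset (Fin N))) =>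
      show ∑ T ∈ A, CRDhelp.wInd T i k * Y i k
          = ((A.card : ℝ) * arm k / N) * Y i k from by
        rw [← Finset.sum_mul, key1 i k])]
    rw [← Finset.mul_sum]
    field_simp [hcard, haR k, hNR]
  · -- Part 2: variance
    have hx0 : ∀ k : Fin 4, ∑ i, (Y i k - (N : ℝ)⁻¹ * ∑ i', Y i' k) = 0 := by
      intro k
      rw [Finset.sum_sub_distrib, Finset.sum_const, Finset.card_univ, Fintype.card_fin,
        nsmul_eq_mul]
      field_simp
      ring
    have hDx : ∀ T ∈ A,
        ((2⁻¹ * ∑ k, g k * ((arm k : ℝ)⁻¹ *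
            ∑ i ∈ univ.filter (fun i => T i = k), Y i k))
          - 2⁻¹ * ∑ k, g k * ((N : ℝ)⁻¹ * ∑ i, Y i k))
        = ∑ k, (2⁻¹ * g k * (arm k : ℝ)⁻¹) *
            ∑ i, CRDhelp.wInd T i k * (Y i k - (N : ℝ)⁻¹ * ∑ i', Y i' k) := by
      intro T hT
      rw [hest T hT,
        show (2⁻¹ : ℝ) * ∑ k, g k * ((N : ℝ)⁻¹ * ∑ i, Y i k)
          = ∑ k, 2⁻¹ * (g k * ((N : ℝ)⁻¹ * ∑ i, Y i k)) from Finset.mul_sum _ _ _,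
        ← Finset.sum_sub_distrib]
      refine Finset.sum_congr rfl fun k _ => ?_
      have h1 : ∑ i, CRDhelp.wInd T i k * (Y i k - (N : ℝ)⁻¹ * ∑ i', Y i' k)
          = (∑ i, CRDhelp.wInd T i k * Y i k)
            - (arm k : ℝ) * ((N : ℝ)⁻¹ * ∑ i', Y i' k) := by
        rw [Finset.sum_congr rfl (fun i (_ : i ∈ (univ : Finset (Fin N))) =>
          mul_sub (CRDhelp.wInd T i k) _ _),
          Finset.sum_sub_distrib, ← Finset.sum_mul, CRDhelp.sum_wInd hA' hT k]
      rw [h1]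
      field_simp [haR k]
    have hsq : ∀ T ∈ A,
        ((2⁻¹ * ∑ k, g k * ((arm k : ℝ)⁻¹ *
            ∑ i ∈ univ.filter (fun i => T i = k), Y i k))
          - 2⁻¹ * ∑ k, g k * ((N : ℝ)⁻¹ * ∑ i, Y i k)) ^ 2
        = ∑ k, ∑ l,
            ((2⁻¹ * g k * (arm k : ℝ)⁻¹) * (2⁻¹ * g l * (arm l : ℝ)⁻¹))
              * ∑ i, ∑ j, ((Y i k - (N : ℝ)⁻¹ * ∑ i', Y i' k)
                  * (Y j l - (N : ℝ)⁻¹ * ∑ i', Y i' l))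
                * (CRDhelp.wInd T i k * CRDhelp.wInd T j l) := by
      intro T hT
      rw [hDx T hT, sq, Finset.sum_mul_sum]
      refine Finset.sum_congr rfl fun k _ => Finset.sum_congr rfl fun l _ => ?_
      have e1 : ((2⁻¹ * g k * (arm k : ℝ)⁻¹) *
            ∑ i, CRDhelp.wInd T i k * (Y i k - (N : ℝ)⁻¹ * ∑ i', Y i' k)) *
          ((2⁻¹ * g l * (arm l : ℝ)⁻¹) *
            ∑ j, CRDhelp.wInd T j l * (Y j l - (N : ℝ)⁻¹ * ∑ i', Y i' l))
          = ((2⁻¹ * g k * (arm k : ℝ)⁻¹) * (2⁻¹ * g l * (arm l : ℝ)⁻¹)) *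
            ∑ i, ∑ j, (CRDhelp.wInd T i k * (Y i k - (N : ℝ)⁻¹ * ∑ i', Y i' k))
              * (CRDhelp.wInd T j l * (Y j l - (N : ℝ)⁻¹ * ∑ i', Y i' l)) := by
        rw [← Finset.sum_mul_sum]; ring
      rw [e1]
      congr 1
      exact Finset.sum_congr rfl fun i _ => Finset.sum_congr rfl fun j _ => by ring
    have hinner : ∀ k l : Fin 4,
        ∑ i, ∑ j, ((Y i k - (N : ℝ)⁻¹ * ∑ i', Y i' k)
            * (Y j l - (N : ℝ)⁻¹ * ∑ i', Y i' l))
            * (∑ T ∈ A, CRDhelp.wInd T i k * CRDhelp.wInd T j l)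
        = ((if k = l then (A.card : ℝ) * arm k / N else 0)
            - (A.card : ℝ) * ((arm k : ℝ) * arm l - if k = l then (arm k : ℝ) else 0)
                / ((N : ℝ) * ((N : ℝ) - 1)))
          * ∑ i, (Y i k - (N : ℝ)⁻¹ * ∑ i', Y i' k)
              * (Y i l - (N : ℝ)⁻¹ * ∑ i', Y i' l) := by
      intro k l
      have h1 : ∑ i, ((Y i k - (N : ℝ)⁻¹ * ∑ i', Y i' k)
            * (Y i l - (N : ℝ)⁻¹ * ∑ i', Y i' l))
            * (∑ T ∈ A, CRDhelp.wInd T i k * CRDhelp.wInd T i l)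
          = (if k = l then (A.card : ℝ) * arm k / N else 0)
            * ∑ i, (Y i k - (N : ℝ)⁻¹ * ∑ i', Y i' k)
                * (Y i l - (N : ℝ)⁻¹ * ∑ i', Y i' l) := by
        rw [Finset.sum_congr rfl (fun i (_ : i ∈ (univ : Finset (Fin N))) => by
          rw [keyd i k l]), ← Finset.sum_mul, mul_comm]
      have h2 : ∀ i : Fin N, ∑ j ∈ univ.erase i,
          ((Y i k - (N : ℝ)⁻¹ * ∑ i', Y i' k) * (Y j l - (N : ℝ)⁻¹ * ∑ i', Y i' l))
            * (∑ T ∈ A, CRDhelp.wInd T i k * CRDhelp.wInd T j l)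
          = ((A.card : ℝ) * ((arm k : ℝ) * arm l - if k = l then (arm k : ℝ) else 0)
                / ((N : ℝ) * ((N : ℝ) - 1)))
            * (-((Y i k - (N : ℝ)⁻¹ * ∑ i', Y i' k)
                * (Y i l - (N : ℝ)⁻¹ * ∑ i', Y i' l))) := by
        intro i
        rw [Finset.sum_congr rfl (fun j hj => by
          rw [key2 i j k l (Ne.symm (Finset.mem_erase.mp hj).1)]),
          ← Finset.sum_mul, ← Finset.mul_sum,
          Finset.sum_erase_eq_sub (mem_univ i), hx0 l]
        ring
      calc ∑ i, ∑ j, ((Y i k - (N : ℝ)⁻¹ * ∑ i', Y i' k)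
              * (Y j l - (N : ℝ)⁻¹ * ∑ i', Y i' l))
              * (∑ T ∈ A, CRDhelp.wInd T i k * CRDhelp.wInd T j l)
          = ∑ i, (((Y i k - (N : ℝ)⁻¹ * ∑ i', Y i' k)
              * (Y i l - (N : ℝ)⁻¹ * ∑ i', Y i' l))
              * (∑ T ∈ A, CRDhelp.wInd T i k * CRDhelp.wInd T i l)
            + ∑ j ∈ univ.erase i, ((Y i k - (N : ℝ)⁻¹ * ∑ i', Y i' k)
              * (Y j l - (N : ℝ)⁻¹ * ∑ i', Y i' l))
              * (∑ T ∈ A, CRDhelp.wInd T i k * CRDhelp.wInd T j l)) :=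
            Finset.sum_congr rfl fun i _ =>
              (Finset.add_sum_erase univ _ (mem_univ i)).symm
        _ = (if k = l then (A.card : ℝ) * arm k / N else 0)
              * (∑ i, (Y i k - (N : ℝ)⁻¹ * ∑ i', Y i' k)
                  * (Y i l - (N : ℝ)⁻¹ * ∑ i', Y i' l))
            + ∑ i, ((A.card : ℝ) * ((arm k : ℝ) * arm l - if k = l then (arm k : ℝ) else 0)
                / ((N : ℝ) * ((N : ℝ) - 1)))
              * (-((Y i k - (N : ℝ)⁻¹ * ∑ i', Y i' k)
                  * (Y i l - (N : ℝ)⁻¹ * ∑ i', Y i' l))) := by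
            rw [Finset.sum_add_distrib, h1,
              Finset.sum_congr rfl fun i (_ : i ∈ (univ : Finset (Fin N))) => h2 i]
        _ = _ := by
            rw [← Finset.mul_sum, Finset.sum_neg_distrib]
            ring
    -- main chain
    rw [Finset.sum_congr rfl hsq, CRDhelp.reorder3,
      show (4⁻¹ : ℝ) * ((N : ℝ) - 1) * ∑ k, ∑ l, g k * g l *
          ((((N : ℝ) * ((N : ℝ) - 1))⁻¹
              * ((if k = l then (N : ℝ) / (arm k : ℝ) else 0) - 1))
            * (((N : ℝ) - 1)⁻¹ * ∑ i,
                (Y i k - (N : ℝ)⁻¹ * ∑ i', Y i' k)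
                  * (Y i l - (N : ℝ)⁻¹ * ∑ i', Y i' l)))
        = ∑ k, ∑ l, 4⁻¹ * ((N : ℝ) - 1) * (g k * g l *
          ((((N : ℝ) * ((N : ℝ) - 1))⁻¹
              * ((if k = l then (N : ℝ) / (arm k : ℝ) else 0) - 1))
            * (((N : ℝ) - 1)⁻¹ * ∑ i,
                (Y i k - (N : ℝ)⁻¹ * ∑ i', Y i' k)
                  * (Y i l - (N : ℝ)⁻¹ * ∑ i', Y i' l)))) from by
        rw [Finset.mul_sum]; exact Finset.sum_congr rfl fun k _ => Finset.mul_sum _ _ _,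
      Finset.mul_sum]
    refine Finset.sum_congr rfl fun k _ => ?_
    rw [Finset.mul_sum]
    refine Finset.sum_congr rfl fun l _ => ?_
    rw [← Finset.mul_sum, CRDhelp.reorderT A _]
    simp only [← Finset.mul_sum]
    rw [hinner k l]
    set q : ℝ := ∑ i, (Y i k - (N : ℝ)⁻¹ * ∑ i', Y i' k)
        * (Y i l - (N : ℝ)⁻¹ * ∑ i', Y i' l) with hq
    by_cases hkl : k = l
    · subst hkl
      simp only [if_pos rfl, if_true]
      exact CRDhelp.auxdiag _ _ _ _ _ (haR k) hcard hNR hN1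
    · simp only [if_neg hkl]
      exact CRDhelp.auxoff _ _ _ _ _ _ _ (haR k) (haR l) hcard hNR hN1
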